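/- For the explicit potential v of the previous theorem (with e/b² ≥ 7/9, c ≤ 1), the function (1+|x|²)v(x) is integrable on ℝ³, but ∫_{ℝ³} |x|⁴ v(x) dx = +∞ (when 2e ≠ b²). -/

import Mathlib

open MeasureTheory Real Set
open scoped ENNReal NNReal

abbrev E3 : Type := EuclideanSpace ℝ (Fin 3)

lemma lintegral_norm3 (g : ℝ → ℝ≥0∞) (hg : Measurable g) :
    ∫⁻ x : E3, g ‖x‖ =
      (volume : Measure E3).toSphere Set.univ *
        ∫⁻ r in Set.Ioi (0:ℝ), ENNReal.ofReal (r ^ 2) * g r := by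
  have hdim : Module.finrank ℝ E3 = 3 := by
    simp [finrank_euclideanSpace]
  have h1 : ∫⁻ x : E3, g ‖x‖ = ∫⁻ x in ({(0:E3)}ᶜ), g ‖x‖ := by
    rw [restrict_compl_singleton]
  rw [h1, ← lintegral_subtype_comap (measurableSet_singleton (0:E3)).compl]
  have hmp := (volume : Measure E3).measurePreserving_homeomorphUnitSphereProd
  have hF : Measurable fun p : Metric.sphere (0:E3) 1 × Ioi (0:ℝ) => g p.2 :=
    hg.comp (measurable_subtype_coe.comp measurable_snd)
  have h2 := hmp.lintegral_comp hF
  rw [hdim] at h2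
  have h2' : ∫⁻ x : ({(0:E3)}ᶜ : Set E3), g ‖x.1‖
      ∂((volume : Measure E3).comap (↑)) =
      ∫⁻ p : Metric.sphere (0:E3) 1 × Ioi (0:ℝ), g p.2
        ∂((volume : Measure E3).toSphere.prod (.volumeIoiPow (3 - 1))) := by
    simpa only [homeomorphUnitSphereProd_apply_snd_coe] using h2
  rw [h2']
  rw [lintegral_prod _ hF.aemeasurable]
  simp only [lintegral_const]
  rw [mul_comm]
  congr 1
  have h3 := lintegral_withDensity_eq_lintegral_mul
      (Measure.comap (Subtype.val) (volume : Measure ℝ))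
      (f := fun r : Ioi (0:ℝ) => ENNReal.ofReal ((r:ℝ) ^ 2))
      ((measurable_subtype_coe.pow_const 2).ennreal_ofReal)
      (g := fun r : Ioi (0:ℝ) => g r) (hg.comp measurable_subtype_coe)
  show ∫⁻ r : Ioi (0:ℝ), g r ∂(Measure.volumeIoiPow 2) = _
  rw [Measure.volumeIoiPow, h3]
  simp only [Pi.mul_apply]
  exact lintegral_subtype_comap measurableSet_Ioi fun r => ENNReal.ofReal (r ^ 2) * g r

lemma integrable_comp3 :
    Integrable (fun x : E3 => (‖x‖ ^ 2)⁻¹ * ((1 + ‖x‖) ^ 2)⁻¹) := by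
  constructor
  · exact Measurable.aestronglyMeasurable (by fun_prop)
  · have hnn : 0 ≤ fun x : E3 => (‖x‖ ^ 2)⁻¹ * ((1 + ‖x‖) ^ 2)⁻¹ := fun x => by positivity
    rw [HasFiniteIntegral, lintegral_enorm_of_nonneg hnn]
    have hg : Measurable fun r : ℝ => ENNReal.ofReal ((r ^ 2)⁻¹ * ((1 + r) ^ 2)⁻¹) := by
      fun_prop
    have := lintegral_norm3 (fun r => ENNReal.ofReal ((r ^ 2)⁻¹ * ((1 + r) ^ 2)⁻¹)) hg
    rw [show (fun x : E3 => ENNReal.ofReal ((‖x‖ ^ 2)⁻¹ * ((1 + ‖x‖) ^ 2)⁻¹)) =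
      (fun x : E3 => (fun r : ℝ => ENNReal.ofReal ((r ^ 2)⁻¹ * ((1 + r) ^ 2)⁻¹)) ‖x‖) from rfl,
      this]
    have hcongr : ∀ r ∈ Ioi (0:ℝ),
        ENNReal.ofReal (r ^ 2) * ENNReal.ofReal ((r ^ 2)⁻¹ * ((1 + r) ^ 2)⁻¹)
          = ENNReal.ofReal (((1 + r) ^ 2)⁻¹) := by
      intro r hr
      have hr0 : 0 < r := hr
      rw [← ENNReal.ofReal_mul (by positivity)]
      congr 1
      field_simp
    rw [setLIntegral_congr_fun measurableSet_Ioi hcongr]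
    have hI : IntegrableOn (fun r : ℝ => ((1 + r) ^ 2)⁻¹) (Ioi (0:ℝ)) := by
      have hsplit : Ioi (0:ℝ) = Ioc (0:ℝ) 1 ∪ Ioi (1:ℝ) := (Ioc_union_Ioi_eq_Ioi zero_le_one).symm
      rw [hsplit]
      apply IntegrableOn.union
      · apply Measure.integrableOn_of_bounded (M := 1) measure_Ioc_lt_top.ne
          (Measurable.aestronglyMeasurable (by fun_prop))
        filter_upwards [ae_restrict_mem measurableSet_Ioc] with r hr
        have hr0 : 0 < r := hr.1
        rw [Real.norm_eq_abs, abs_of_nonneg (by positivity)]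
        rw [inv_le_one_iff₀]
        right; nlinarith
      · have hbase : IntegrableOn (fun r : ℝ => r ^ (-2:ℝ)) (Ioi (1:ℝ)) :=
          integrableOn_Ioi_rpow_of_lt (by norm_num) one_pos
        apply hbase.mono' (Measurable.aestronglyMeasurable (by fun_prop))
        filter_upwards [ae_restrict_mem measurableSet_Ioi] with r hr
        have hr1 : (1:ℝ) < r := hr
        have hr0 : (0:ℝ) < r := lt_trans one_pos hr1
        rw [Real.norm_eq_abs, abs_of_nonneg (by positivity)]
        rw [show (-2:ℝ) = -(2:ℕ) by norm_num, Real.rpow_neg hr0.le, Real.rpow_natCast]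
        apply inv_anti₀ (by positivity)
        nlinarith
    exact ENNReal.mul_lt_top (measure_lt_top _ _) hI.setLIntegral_lt_top

set_option maxHeartbeats 1000000


lemma bound_upper (e b c : ℝ) (he : 0 < e) (hb : 0 < b) (hc : 0 < c)
    (heb : 7 / 9 ≤ e / b ^ 2) (hc1 : c ≤ 1) (r : ℝ) (hr : 0 < r) :
    (1 + r ^ 2) * (12 * c * (b ^ 6 * r ^ 6 * (2 * e - b ^ 2)
          + b ^ 4 * r ^ 4 * (9 * e - 7 * b ^ 2)
          + 4 * b ^ 2 * r ^ 2 * (3 * e - 2 * b ^ 2)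
          + (5 * e + 16 * b ^ 2))
        / ((1 + b ^ 2 * r ^ 2) ^ 2 * (4 + b ^ 2 * r ^ 2) ^ 2
            * ((1 + b ^ 2 * r ^ 2) ^ 2 - c)))
      ≤ (24 * (1 + b⁻¹ ^ 2) ^ 2 * (28 * e + 16 * b ^ 2) / b ^ 2)
          * ((r ^ 2)⁻¹ * ((1 + r) ^ 2)⁻¹) := by
  have hb2 : (0:ℝ) < b ^ 2 := by positivity
  have he9 : 7 / 9 * b ^ 2 ≤ e := by
    have h := mul_le_mul_of_nonneg_right heb hb2.le
    rw [div_mul_cancel₀ _ hb2.ne'] at h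
    linarith
  have hA : 0 ≤ 2 * e - b ^ 2 := by nlinarith
  have hB : 0 ≤ 9 * e - 7 * b ^ 2 := by nlinarith
  have hCc : 0 ≤ 3 * e - 2 * b ^ 2 := by nlinarith
  have hu' : (0:ℝ) < b ^ 2 * r ^ 2 := by positivity
  have hden1 : (0:ℝ) < (1 + b ^ 2 * r ^ 2) ^ 2 - c := by
    nlinarith [sq_nonneg (b ^ 2 * r ^ 2)]
  have hD : (0:ℝ) < (1 + b ^ 2 * r ^ 2) ^ 2 * (4 + b ^ 2 * r ^ 2) ^ 2
      * ((1 + b ^ 2 * r ^ 2) ^ 2 - c) :=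
    mul_pos (mul_pos (by positivity) (by positivity)) hden1
  rw [mul_div_assoc', ← mul_inv, ← div_eq_mul_inv,
    div_le_div_iff₀ hD (by positivity)]
  set u := b ^ 2 * r ^ 2 with hu_def
  have hu0 : 0 ≤ u := le_of_lt hu'
  -- numerator bound
  have hNum : 12 * c * (b ^ 6 * r ^ 6 * (2 * e - b ^ 2)
          + b ^ 4 * r ^ 4 * (9 * e - 7 * b ^ 2)
          + 4 * b ^ 2 * r ^ 2 * (3 * e - 2 * b ^ 2)
          + (5 * e + 16 * b ^ 2))
      ≤ 12 * (28 * e + 16 * b ^ 2) * (1 + u) ^ 3 := by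
    have e1 : b ^ 6 * r ^ 6 = u ^ 3 := by rw [hu_def]; ring
    have e2 : b ^ 4 * r ^ 4 = u ^ 2 := by rw [hu_def]; ring
    have h3 : u ^ 3 ≤ (1 + u) ^ 3 := by nlinarith
    have h2 : u ^ 2 ≤ (1 + u) ^ 3 := by nlinarith
    have h1 : u ≤ (1 + u) ^ 3 := by nlinarith
    have h0 : 1 ≤ (1 + u) ^ 3 := by nlinarith
    have w1 : 0 ≤ u ^ 3 * (2 * e - b ^ 2) := mul_nonneg (pow_nonneg hu0 3) hA
    have w2 : 0 ≤ u ^ 2 * (9 * e - 7 * b ^ 2) := mul_nonneg (pow_nonneg hu0 2) hB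
    have w3 : 0 ≤ 4 * u * (3 * e - 2 * b ^ 2) :=
      mul_nonneg (mul_nonneg (by norm_num) hu0) hCc
    have hsum : 0 ≤ u ^ 3 * (2 * e - b ^ 2) + u ^ 2 * (9 * e - 7 * b ^ 2)
        + 4 * u * (3 * e - 2 * b ^ 2) + (5 * e + 16 * b ^ 2) := by nlinarith
    have hcN : 12 * c * (b ^ 6 * r ^ 6 * (2 * e - b ^ 2)
          + b ^ 4 * r ^ 4 * (9 * e - 7 * b ^ 2)
          + 4 * b ^ 2 * r ^ 2 * (3 * e - 2 * b ^ 2)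
          + (5 * e + 16 * b ^ 2))
        ≤ 12 * 1 * (u ^ 3 * (2 * e - b ^ 2) + u ^ 2 * (9 * e - 7 * b ^ 2)
          + 4 * u * (3 * e - 2 * b ^ 2) + (5 * e + 16 * b ^ 2)) := by
      rw [e1, e2]
      have h12 : 12 * c ≤ 12 * 1 := by linarith
      calc 12 * c * (u ^ 3 * (2 * e - b ^ 2) + u ^ 2 * (9 * e - 7 * b ^ 2)
            + 4 * b ^ 2 * r ^ 2 * (3 * e - 2 * b ^ 2) + (5 * e + 16 * b ^ 2))
          = 12 * c * (u ^ 3 * (2 * e - b ^ 2) + u ^ 2 * (9 * e - 7 * b ^ 2)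
            + 4 * u * (3 * e - 2 * b ^ 2) + (5 * e + 16 * b ^ 2)) := by rw [hu_def]; ring
        _ ≤ 12 * 1 * (u ^ 3 * (2 * e - b ^ 2) + u ^ 2 * (9 * e - 7 * b ^ 2)
            + 4 * u * (3 * e - 2 * b ^ 2) + (5 * e + 16 * b ^ 2)) :=
            mul_le_mul_of_nonneg_right h12 hsum
    refine hcN.trans ?_
    have t3 := mul_le_mul_of_nonneg_right h3 hA
    have t2 := mul_le_mul_of_nonneg_right h2 hB
    have t1 := mul_le_mul_of_nonneg_right h1 hCc
    have t0 := mul_le_mul_of_nonneg_right h0 (by nlinarith : (0:ℝ) ≤ 5 * e + 16 * b ^ 2)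
    have tb : (0:ℝ) ≤ 16 * b ^ 2 * (1 + u) ^ 3 := by positivity
    nlinarith [t3, t2, t1, t0, tb]
  -- denominator bound
  have hDD : u * (1 + u) ^ 5 ≤ (1 + u) ^ 2 * (4 + u) ^ 2 * ((1 + u) ^ 2 - c) := by
    have d1 : (1 + u) ^ 2 ≤ (4 + u) ^ 2 := by nlinarith
    have d2 : u * (1 + u) ≤ (1 + u) ^ 2 - c := by nlinarith
    calc u * (1 + u) ^ 5 = (1 + u) ^ 2 * (1 + u) ^ 2 * (u * (1 + u)) := by ring
      _ ≤ (1 + u) ^ 2 * (4 + u) ^ 2 * (u * (1 + u)) := by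
          apply mul_le_mul_of_nonneg_right _ (by positivity)
          exact mul_le_mul_of_nonneg_left d1 (by positivity)
      _ ≤ (1 + u) ^ 2 * (4 + u) ^ 2 * ((1 + u) ^ 2 - c) :=
          mul_le_mul_of_nonneg_left d2 (by positivity)
  -- middle inequality
  set m := 1 + b⁻¹ ^ 2 with hm_def
  have hm0 : (0:ℝ) < m := by rw [hm_def]; positivity
  have hbb : b⁻¹ ^ 2 * b ^ 2 = 1 := by field_simp
  have s1 : (1 + r) ^ 2 ≤ 2 * (1 + r ^ 2) := by nlinarith [sq_nonneg (r - 1)]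
  have s2 : 1 + r ^ 2 ≤ m * (1 + u) := by
    have hbbr : b⁻¹ ^ 2 * (b ^ 2 * r ^ 2) = r ^ 2 := by
      rw [← mul_assoc, hbb]; ring
    rw [hm_def, hu_def]
    nlinarith [hbbr, hu'.le, sq_nonneg b⁻¹]
  have s3 : (1 + r ^ 2) * (1 + r) ^ 2 ≤ 2 * m ^ 2 * (1 + u) ^ 2 := by
    have t1 : (1 + r ^ 2) * (1 + r) ^ 2 ≤ (1 + r ^ 2) * (2 * (1 + r ^ 2)) :=
      mul_le_mul_of_nonneg_left s1 (by positivity)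
    have t3 : (1 + r ^ 2) * (1 + r ^ 2) ≤ (m * (1 + u)) * (m * (1 + u)) :=
      mul_le_mul s2 s2 (by positivity) (by positivity)
    nlinarith [t1, t3]
  have hcancel : 24 * m ^ 2 * (28 * e + 16 * b ^ 2) / b ^ 2 * u
      = 24 * m ^ 2 * (28 * e + 16 * b ^ 2) * r ^ 2 := by
    rw [hu_def]; field_simp
  calc (1 + r ^ 2) * (12 * c * (b ^ 6 * r ^ 6 * (2 * e - b ^ 2)
          + b ^ 4 * r ^ 4 * (9 * e - 7 * b ^ 2)
          + 4 * b ^ 2 * r ^ 2 * (3 * e - 2 * b ^ 2)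
          + (5 * e + 16 * b ^ 2))) * (r ^ 2 * (1 + r) ^ 2)
      ≤ (1 + r ^ 2) * (12 * (28 * e + 16 * b ^ 2) * (1 + u) ^ 3) * (r ^ 2 * (1 + r) ^ 2) := by
        apply mul_le_mul_of_nonneg_right _ (by positivity)
        exact mul_le_mul_of_nonneg_left hNum (by positivity)
    _ = (12 * (28 * e + 16 * b ^ 2) * (1 + u) ^ 3 * r ^ 2) * ((1 + r ^ 2) * (1 + r) ^ 2) := by
        ring
    _ ≤ (12 * (28 * e + 16 * b ^ 2) * (1 + u) ^ 3 * r ^ 2) * (2 * m ^ 2 * (1 + u) ^ 2) :=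
        mul_le_mul_of_nonneg_left s3 (by positivity)
    _ = (24 * m ^ 2 * (28 * e + 16 * b ^ 2) * r ^ 2) * (1 + u) ^ 5 := by ring
    _ = (24 * m ^ 2 * (28 * e + 16 * b ^ 2) / b ^ 2 * u) * (1 + u) ^ 5 := by rw [hcancel]
    _ = (24 * m ^ 2 * (28 * e + 16 * b ^ 2) / b ^ 2) * (u * (1 + u) ^ 5) := by ring
    _ ≤ (24 * m ^ 2 * (28 * e + 16 * b ^ 2) / b ^ 2)
          * ((1 + u) ^ 2 * (4 + u) ^ 2 * ((1 + u) ^ 2 - c)) :=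
        mul_le_mul_of_nonneg_left hDD (by positivity)

lemma bound_lower (e b c : ℝ) (he : 0 < e) (hb : 0 < b) (hc : 0 < c)
    (heb : 7 / 9 ≤ e / b ^ 2) (hc1 : c ≤ 1) (r : ℝ) (hr : 1 < r) :
    20 / 3 * c * b ^ 8 / ((1 + b ^ 2) ^ 4 * (4 + b ^ 2) ^ 2)
      ≤ r ^ 2 * (r ^ 4 * (12 * c * (b ^ 6 * r ^ 6 * (2 * e - b ^ 2)
          + b ^ 4 * r ^ 4 * (9 * e - 7 * b ^ 2)
          + 4 * b ^ 2 * r ^ 2 * (3 * e - 2 * b ^ 2)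
          + (5 * e + 16 * b ^ 2))
        / ((1 + b ^ 2 * r ^ 2) ^ 2 * (4 + b ^ 2 * r ^ 2) ^ 2
            * ((1 + b ^ 2 * r ^ 2) ^ 2 - c)))) := by
  have hb2 : (0:ℝ) < b ^ 2 := by positivity
  have hr0 : (0:ℝ) < r := lt_trans one_pos hr
  have hr2 : (1:ℝ) ≤ r ^ 2 := by nlinarith
  have he9 : 7 / 9 * b ^ 2 ≤ e := by
    have h := mul_le_mul_of_nonneg_right heb hb2.le
    rw [div_mul_cancel₀ _ hb2.ne'] at h
    linarith
  have hA : 5 / 9 * b ^ 2 ≤ 2 * e - b ^ 2 := by nlinarith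
  have hB : 0 ≤ 9 * e - 7 * b ^ 2 := by nlinarith
  have hCc : 0 ≤ 3 * e - 2 * b ^ 2 := by nlinarith
  have hu' : (0:ℝ) < b ^ 2 * r ^ 2 := by positivity
  have hden1 : (0:ℝ) < (1 + b ^ 2 * r ^ 2) ^ 2 - c := by
    nlinarith [sq_nonneg (b ^ 2 * r ^ 2)]
  have hD : (0:ℝ) < (1 + b ^ 2 * r ^ 2) ^ 2 * (4 + b ^ 2 * r ^ 2) ^ 2
      * ((1 + b ^ 2 * r ^ 2) ^ 2 - c) :=
    mul_pos (mul_pos (by positivity) (by positivity)) hden1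
  rw [show r ^ 2 * (r ^ 4 * (12 * c * (b ^ 6 * r ^ 6 * (2 * e - b ^ 2)
          + b ^ 4 * r ^ 4 * (9 * e - 7 * b ^ 2)
          + 4 * b ^ 2 * r ^ 2 * (3 * e - 2 * b ^ 2)
          + (5 * e + 16 * b ^ 2))
        / ((1 + b ^ 2 * r ^ 2) ^ 2 * (4 + b ^ 2 * r ^ 2) ^ 2
            * ((1 + b ^ 2 * r ^ 2) ^ 2 - c))))
      = (r ^ 6 * (12 * c * (b ^ 6 * r ^ 6 * (2 * e - b ^ 2)
          + b ^ 4 * r ^ 4 * (9 * e - 7 * b ^ 2)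
          + 4 * b ^ 2 * r ^ 2 * (3 * e - 2 * b ^ 2)
          + (5 * e + 16 * b ^ 2))))
        / ((1 + b ^ 2 * r ^ 2) ^ 2 * (4 + b ^ 2 * r ^ 2) ^ 2
            * ((1 + b ^ 2 * r ^ 2) ^ 2 - c)) from by ring]
  rw [le_div_iff₀ hD]
  have d1 : 1 + b ^ 2 * r ^ 2 ≤ (1 + b ^ 2) * r ^ 2 := by nlinarith
  have d1' : (1 + b ^ 2 * r ^ 2) ^ 2 ≤ ((1 + b ^ 2) * r ^ 2) ^ 2 :=
    pow_le_pow_left₀ (by positivity) d1 2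
  have d2base : 4 + b ^ 2 * r ^ 2 ≤ (4 + b ^ 2) * r ^ 2 := by nlinarith
  have d2 : (4 + b ^ 2 * r ^ 2) ^ 2 ≤ ((4 + b ^ 2) * r ^ 2) ^ 2 :=
    pow_le_pow_left₀ (by positivity) d2base 2
  have d3 : (1 + b ^ 2 * r ^ 2) ^ 2 - c ≤ ((1 + b ^ 2) * r ^ 2) ^ 2 := by
    nlinarith [d1']
  have hDle : (1 + b ^ 2 * r ^ 2) ^ 2 * (4 + b ^ 2 * r ^ 2) ^ 2
      * ((1 + b ^ 2 * r ^ 2) ^ 2 - c) ≤ (1 + b ^ 2) ^ 4 * (4 + b ^ 2) ^ 2 * r ^ 12 := by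
    calc (1 + b ^ 2 * r ^ 2) ^ 2 * (4 + b ^ 2 * r ^ 2) ^ 2 * ((1 + b ^ 2 * r ^ 2) ^ 2 - c)
        ≤ (((1 + b ^ 2) * r ^ 2) ^ 2 * ((4 + b ^ 2) * r ^ 2) ^ 2)
            * (((1 + b ^ 2) * r ^ 2) ^ 2) := by
          apply mul_le_mul _ d3 (le_of_lt hden1) (by positivity)
          exact mul_le_mul d1' d2 (by positivity) (by positivity)
      _ = (1 + b ^ 2) ^ 4 * (4 + b ^ 2) ^ 2 * r ^ 12 := by ring
  have hKpos : (0:ℝ) < 20 / 3 * c * b ^ 8 / ((1 + b ^ 2) ^ 4 * (4 + b ^ 2) ^ 2) := by positivity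
  have hcancel2 : 20 / 3 * c * b ^ 8 / ((1 + b ^ 2) ^ 4 * (4 + b ^ 2) ^ 2)
      * ((1 + b ^ 2) ^ 4 * (4 + b ^ 2) ^ 2) = 20 / 3 * c * b ^ 8 :=
    div_mul_cancel₀ _ (by positivity)
  calc 20 / 3 * c * b ^ 8 / ((1 + b ^ 2) ^ 4 * (4 + b ^ 2) ^ 2)
        * ((1 + b ^ 2 * r ^ 2) ^ 2 * (4 + b ^ 2 * r ^ 2) ^ 2 * ((1 + b ^ 2 * r ^ 2) ^ 2 - c))
      ≤ 20 / 3 * c * b ^ 8 / ((1 + b ^ 2) ^ 4 * (4 + b ^ 2) ^ 2)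
        * ((1 + b ^ 2) ^ 4 * (4 + b ^ 2) ^ 2 * r ^ 12) :=
        mul_le_mul_of_nonneg_left hDle (le_of_lt hKpos)
    _ = (20 / 3 * c * b ^ 8 / ((1 + b ^ 2) ^ 4 * (4 + b ^ 2) ^ 2)
        * ((1 + b ^ 2) ^ 4 * (4 + b ^ 2) ^ 2)) * r ^ 12 := by ring
    _ = 20 / 3 * c * b ^ 8 * r ^ 12 := by rw [hcancel2]
    _ ≤ r ^ 6 * (12 * c * (b ^ 6 * r ^ 6 * (2 * e - b ^ 2)
          + b ^ 4 * r ^ 4 * (9 * e - 7 * b ^ 2)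
          + 4 * b ^ 2 * r ^ 2 * (3 * e - 2 * b ^ 2)
          + (5 * e + 16 * b ^ 2))) := by
        have k1 : 12 * c * (b ^ 6 * r ^ 6 * (5 / 9 * b ^ 2)) ≤
            12 * c * (b ^ 6 * r ^ 6 * (2 * e - b ^ 2)) := by
          apply mul_le_mul_of_nonneg_left _ (by positivity)
          exact mul_le_mul_of_nonneg_left hA (by positivity)
        have k1' : r ^ 6 * (12 * c * (b ^ 6 * r ^ 6 * (5 / 9 * b ^ 2)))
            ≤ r ^ 6 * (12 * c * (b ^ 6 * r ^ 6 * (2 * e - b ^ 2))) :=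
          mul_le_mul_of_nonneg_left k1 (by positivity)
        have k2' : 0 ≤ r ^ 6 * (12 * c * (b ^ 4 * r ^ 4 * (9 * e - 7 * b ^ 2))) :=
          mul_nonneg (by positivity)
            (mul_nonneg (by positivity) (mul_nonneg (by positivity) hB))
        have k3' : 0 ≤ r ^ 6 * (12 * c * (4 * b ^ 2 * r ^ 2 * (3 * e - 2 * b ^ 2))) :=
          mul_nonneg (by positivity)
            (mul_nonneg (by positivity) (mul_nonneg (by positivity) hCc))
        have k4' : 0 ≤ r ^ 6 * (12 * c * (5 * e + 16 * b ^ 2)) := by positivity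
        nlinarith [k1', k2', k3', k4']

theorem stmt_6 (e b c : ℝ) (he : 0 < e) (hb : 0 < b) (hc : 0 < c)
    (heb : 7 / 9 ≤ e / b ^ 2) (hc1 : c ≤ 1)
    (v : EuclideanSpace ℝ (Fin 3) → ℝ)
    (hv : ∀ x, v x = 12 * c * (b ^ 6 * ‖x‖ ^ 6 * (2 * e - b ^ 2)
          + b ^ 4 * ‖x‖ ^ 4 * (9 * e - 7 * b ^ 2)
          + 4 * b ^ 2 * ‖x‖ ^ 2 * (3 * e - 2 * b ^ 2)
          + (5 * e + 16 * b ^ 2))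
        / ((1 + b ^ 2 * ‖x‖ ^ 2) ^ 2 * (4 + b ^ 2 * ‖x‖ ^ 2) ^ 2
            * ((1 + b ^ 2 * ‖x‖ ^ 2) ^ 2 - c))) :
    Integrable (fun x => (1 + ‖x‖ ^ 2) * v x)
      ∧ (2 * e ≠ b ^ 2 →
          ∫⁻ x, ENNReal.ofReal (‖x‖ ^ 4 * v x) = ⊤) := by
  have hb2 : (0:ℝ) < b ^ 2 := by positivity
  have he9 : 7 / 9 * b ^ 2 ≤ e := by
    have h := mul_le_mul_of_nonneg_right heb hb2.le
    rw [div_mul_cancel₀ _ hb2.ne'] at h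
    linarith
  have hA : 0 ≤ 2 * e - b ^ 2 := by nlinarith
  have hB : 0 ≤ 9 * e - 7 * b ^ 2 := by nlinarith
  have hCc : 0 ≤ 3 * e - 2 * b ^ 2 := by nlinarith
  -- nonnegativity of v
  have hv0 : ∀ x : E3, 0 ≤ v x := by
    intro x
    rw [hv]
    apply div_nonneg
    · have w1 : 0 ≤ b ^ 6 * ‖x‖ ^ 6 * (2 * e - b ^ 2) := mul_nonneg (by positivity) hA
      have w2 : 0 ≤ b ^ 4 * ‖x‖ ^ 4 * (9 * e - 7 * b ^ 2) := mul_nonneg (by positivity) hB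
      have w3 : 0 ≤ 4 * b ^ 2 * ‖x‖ ^ 2 * (3 * e - 2 * b ^ 2) := mul_nonneg (by positivity) hCc
      have w4 : (0:ℝ) ≤ 5 * e + 16 * b ^ 2 := by nlinarith
      have : (0:ℝ) ≤ 12 * c := by positivity
      nlinarith
    · have h1 : (0:ℝ) ≤ (1 + b ^ 2 * ‖x‖ ^ 2) ^ 2 - c := by
        nlinarith [sq_nonneg (b ^ 2 * ‖x‖ ^ 2), sq_nonneg (b * ‖x‖), norm_nonneg x,
          sq_nonneg ‖x‖, mul_nonneg (sq_nonneg b) (sq_nonneg ‖x‖)]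
      exact mul_nonneg (mul_nonneg (by positivity) (by positivity)) h1
  constructor
  · -- Integrability
    set C := 24 * (1 + b⁻¹ ^ 2) ^ 2 * (28 * e + 16 * b ^ 2) / b ^ 2 with hC_def
    have hint : Integrable (fun x : E3 => C * ((‖x‖ ^ 2)⁻¹ * ((1 + ‖x‖) ^ 2)⁻¹)) :=
      integrable_comp3.const_mul C
    apply hint.mono'
    · have hfun : (fun x : E3 => (1 + ‖x‖ ^ 2) * v x)
          = fun x : E3 => (1 + ‖x‖ ^ 2) * (12 * c * (b ^ 6 * ‖x‖ ^ 6 * (2 * e - b ^ 2)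
            + b ^ 4 * ‖x‖ ^ 4 * (9 * e - 7 * b ^ 2)
            + 4 * b ^ 2 * ‖x‖ ^ 2 * (3 * e - 2 * b ^ 2)
            + (5 * e + 16 * b ^ 2))
          / ((1 + b ^ 2 * ‖x‖ ^ 2) ^ 2 * (4 + b ^ 2 * ‖x‖ ^ 2) ^ 2
              * ((1 + b ^ 2 * ‖x‖ ^ 2) ^ 2 - c))) := funext fun x => by rw [hv]
      rw [hfun]
      exact Measurable.aestronglyMeasurable (by fun_prop)
    · have h0 : ∀ᵐ x : E3 ∂(volume), x ≠ 0 := by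
        refine ae_iff.mpr ?_
        simp only [not_not, setOf_eq_eq_singleton]
        exact measure_singleton 0
      filter_upwards [h0] with x hx
      have hr : 0 < ‖x‖ := norm_pos_iff.mpr hx
      rw [Real.norm_eq_abs, abs_of_nonneg (mul_nonneg (by positivity) (hv0 x)), hv]
      exact bound_upper e b c he hb hc heb hc1 ‖x‖ hr
  · -- divergence
    intro _
    set K := 20 / 3 * c * b ^ 8 / ((1 + b ^ 2) ^ 4 * (4 + b ^ 2) ^ 2) with hK_def
    have hKpos : 0 < K := by rw [hK_def]; positivity
    have hg : Measurable (fun r : ℝ => ENNReal.ofReal (r ^ 4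
        * (12 * c * (b ^ 6 * r ^ 6 * (2 * e - b ^ 2)
            + b ^ 4 * r ^ 4 * (9 * e - 7 * b ^ 2)
            + 4 * b ^ 2 * r ^ 2 * (3 * e - 2 * b ^ 2)
            + (5 * e + 16 * b ^ 2))
          / ((1 + b ^ 2 * r ^ 2) ^ 2 * (4 + b ^ 2 * r ^ 2) ^ 2
              * ((1 + b ^ 2 * r ^ 2) ^ 2 - c))))) := by fun_prop
    have hrw : ∫⁻ x : E3, ENNReal.ofReal (‖x‖ ^ 4 * v x)
        = ∫⁻ x : E3, (fun r : ℝ => ENNReal.ofReal (r ^ 4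
        * (12 * c * (b ^ 6 * r ^ 6 * (2 * e - b ^ 2)
            + b ^ 4 * r ^ 4 * (9 * e - 7 * b ^ 2)
            + 4 * b ^ 2 * r ^ 2 * (3 * e - 2 * b ^ 2)
            + (5 * e + 16 * b ^ 2))
          / ((1 + b ^ 2 * r ^ 2) ^ 2 * (4 + b ^ 2 * r ^ 2) ^ 2
              * ((1 + b ^ 2 * r ^ 2) ^ 2 - c))))) ‖x‖ :=
      lintegral_congr fun x => by rw [hv]
    rw [hrw, lintegral_norm3 _ hg]
    apply ENNReal.mul_eq_top.mpr
    refine Or.inl ⟨?_, ?_⟩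
    · rw [Measure.toSphere_apply_univ]
      refine mul_ne_zero ?_ ?_
      · have h3 : Module.finrank ℝ E3 = 3 := by simp [finrank_euclideanSpace]
        rw [h3]
        norm_num
      · exact (Metric.measure_ball_pos _ _ one_pos).ne'
    · rw [eq_top_iff]
      calc (⊤:ℝ≥0∞) = ENNReal.ofReal K * volume (Ioi (1:ℝ)) := by
            rw [Real.volume_Ioi, ENNReal.mul_top (ENNReal.ofReal_pos.mpr hKpos).ne']
        _ = ∫⁻ _ in Ioi (1:ℝ), ENNReal.ofReal K := (setLIntegral_const _ _).symm
        _ ≤ ∫⁻ r in Ioi (1:ℝ), ENNReal.ofReal (r ^ 2)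
              * ENNReal.ofReal (r ^ 4
                * (12 * c * (b ^ 6 * r ^ 6 * (2 * e - b ^ 2)
                    + b ^ 4 * r ^ 4 * (9 * e - 7 * b ^ 2)
                    + 4 * b ^ 2 * r ^ 2 * (3 * e - 2 * b ^ 2)
                    + (5 * e + 16 * b ^ 2))
                  / ((1 + b ^ 2 * r ^ 2) ^ 2 * (4 + b ^ 2 * r ^ 2) ^ 2
                      * ((1 + b ^ 2 * r ^ 2) ^ 2 - c)))) := by
            apply setLIntegral_mono (by fun_prop)
            intro r hr
            rw [← ENNReal.ofReal_mul (by positivity)]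
            exact ENNReal.ofReal_le_ofReal (bound_lower e b c he hb hc heb hc1 r hr)
        _ ≤ ∫⁻ r in Ioi (0:ℝ), ENNReal.ofReal (r ^ 2)
              * ENNReal.ofReal (r ^ 4
                * (12 * c * (b ^ 6 * r ^ 6 * (2 * e - b ^ 2)
                    + b ^ 4 * r ^ 4 * (9 * e - 7 * b ^ 2)
                    + 4 * b ^ 2 * r ^ 2 * (3 * e - 2 * b ^ 2)
                    + (5 * e + 16 * b ^ 2))
                  / ((1 + b ^ 2 * r ^ 2) ^ 2 * (4 + b ^ 2 * r ^ 2) ^ 2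
                      * ((1 + b ^ 2 * r ^ 2) ^ 2 - c)))) :=
            lintegral_mono_set (Ioi_subset_Ioi zero_le_one)
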